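/- For every integer n ≥ 3, the broadcast irredundance number of the cycle C_n equals its broadcast domination number and both equal ⌈n/3⌉, i.e. ir_b(C_n) = γ_b(C_n) = ⌈n/3⌉. -/

import Mathlib

open SimpleGraph

namespace Broadcast

variable {V : Type*} [Fintype V]

/-- The eccentricity of a vertex: the maximum distance from `v` to any vertex. -/
noncomputable def ecc (G : SimpleGraph V) (v : V) : ℕ :=
  Finset.univ.sup fun u => G.dist v u

/-- A broadcast on `G`: `f v ≤ e_G(v)` for every vertex `v`. -/
def IsBroadcast (G : SimpleGraph V) (f : V → ℕ) : Prop :=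
  ∀ v, f v ≤ ecc G v

/-- The cost of a broadcast. -/
def cost (f : V → ℕ) : ℕ := ∑ v, f v

/-- `hears G f u` is H_f(u): the set of f-broadcast vertices `v` with `d(u,v) ≤ f v`. -/
def hears (G : SimpleGraph V) (f : V → ℕ) (u : V) : Set V :=
  {v | 1 ≤ f v ∧ G.dist u v ≤ f v}

/-- A dominating broadcast: every vertex hears some broadcast vertex. -/
def IsDominating (G : SimpleGraph V) (f : V → ℕ) : Prop :=
  IsBroadcast G f ∧ ∀ u, (hears G f u).Nonempty

/-- A minimal dominating broadcast. -/
def IsMinimalDominating (G : SimpleGraph V) (f : V → ℕ) : Prop :=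
  IsDominating G f ∧ ∀ g, IsDominating G g → (∀ v, g v ≤ f v) → g = f

/-- The broadcast domination number γ_b: minimum cost of a dominating broadcast. -/
noncomputable def broadcastDomination (G : SimpleGraph V) : ℕ :=
  sInf {c | ∃ f, IsDominating G f ∧ cost f = c}

/-- The upper broadcast domination number Γ_b: maximum cost of a minimal dominating broadcast. -/
noncomputable def upperBroadcastDomination (G : SimpleGraph V) : ℕ :=
  sSup {c | ∃ f, IsMinimalDominating G f ∧ cost f = c}

/-- The private f-neighborhood PN_f(v): vertices hearing only `v`. -/
def privateNbhd (G : SimpleGraph V) (f : V → ℕ) (v : V) : Set V :=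
  {u | hears G f u = {v}}

open Classical in
/-- The private f-border PB_f(v). -/
noncomputable def privateBorder (G : SimpleGraph V) (f : V → ℕ) (v : V) : Set V :=
  if f v = 1 ∧ privateNbhd G f v = {v} then {v}
  else {u | u ∈ privateNbhd G f v ∧ G.dist u v = f v}

/-- An irredundant broadcast: every broadcast vertex has a nonempty private border. -/
def IsIrredundant (G : SimpleGraph V) (f : V → ℕ) : Prop :=
  IsBroadcast G f ∧ ∀ v, 1 ≤ f v → (privateBorder G f v).Nonempty

/-- A maximal irredundant broadcast. -/
def IsMaximalIrredundant (G : SimpleGraph V) (f : V → ℕ) : Prop :=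
  IsIrredundant G f ∧ ∀ g, IsIrredundant G g → (∀ v, f v ≤ g v) → g = f

/-- The upper broadcast irredundance number IR_b: maximum cost of an irredundant broadcast. -/
noncomputable def upperBroadcastIrredundance (G : SimpleGraph V) : ℕ :=
  sSup {c | ∃ f, IsIrredundant G f ∧ cost f = c}

/-- The broadcast irredundance number ir_b: minimum cost of a maximal irredundant broadcast. -/
noncomputable def broadcastIrredundance (G : SimpleGraph V) : ℕ :=
  sInf {c | ∃ f, IsMaximalIrredundant G f ∧ cost f = c}

/-- An independent broadcast: every broadcast vertex hears only itself, i.e. |H_f(v)| = 1. -/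
def IsIndependent (G : SimpleGraph V) (f : V → ℕ) : Prop :=
  IsBroadcast G f ∧ ∀ v, 1 ≤ f v → hears G f v = {v}

/-- A maximal independent broadcast. -/
def IsMaximalIndependent (G : SimpleGraph V) (f : V → ℕ) : Prop :=
  IsIndependent G f ∧ ∀ g, IsIndependent G g → (∀ v, f v ≤ g v) → g = f

/-- The broadcast independence number β_b: maximum cost of an independent broadcast. -/
noncomputable def broadcastIndependence (G : SimpleGraph V) : ℕ :=
  sSup {c | ∃ f, IsIndependent G f ∧ cost f = c}

/-- The lower broadcast independence number i_b: minimum cost of a maximal independent broadcast. -/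
noncomputable def lowerBroadcastIndependence (G : SimpleGraph V) : ℕ :=
  sInf {c | ∃ f, IsMaximalIndependent G f ∧ cost f = c}

/-- A packing broadcast: every vertex hears at most one broadcast vertex. -/
def IsPacking (G : SimpleGraph V) (f : V → ℕ) : Prop :=
  IsBroadcast G f ∧ ∀ u, (hears G f u).Subsingleton

/-- A maximal packing broadcast. -/
def IsMaximalPacking (G : SimpleGraph V) (f : V → ℕ) : Prop :=
  IsPacking G f ∧ ∀ g, IsPacking G g → (∀ v, f v ≤ g v) → g = f

/-- The broadcast packing number P_b: maximum cost of a packing broadcast. -/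
noncomputable def broadcastPacking (G : SimpleGraph V) : ℕ :=
  sSup {c | ∃ f, IsPacking G f ∧ cost f = c}

/-- The lower broadcast packing number p_b: minimum cost of a maximal packing broadcast. -/
noncomputable def lowerBroadcastPacking (G : SimpleGraph V) : ℕ :=
  sInf {c | ∃ f, IsMaximalPacking G f ∧ cost f = c}

end Broadcast

open Fin.CommRing

namespace CycleDist

variable {n : ℕ} [NeZero n]

lemma val_one'' (hn : 2 ≤ n) : (1 : Fin n).val = 1 := by
  rw [Fin.val_one']
  exact Nat.mod_eq_of_lt (by omega)

lemma val_neg' (a : Fin n) :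
    (-a).val = if a.val = 0 then 0 else n - a.val := by
  have h : (-a).val = (n - a.val) % n := by
    rcases n with _ | m
    · exact absurd rfl (NeZero.ne 0)
    · rfl
  rw [h]
  rcases eq_or_ne a.val 0 with h' | h'
  · simp [h']
  · have := a.isLt
    rw [Nat.mod_eq_of_lt (by omega)]
    simp [h']

lemma val_add_one' (hn : 2 ≤ n) (a : Fin n) :
    (a + 1).val = if a.val + 1 = n then 0 else a.val + 1 := by
  rw [Fin.val_add, val_one'' hn]
  have := a.isLt
  rcases eq_or_ne (a.val + 1) n with h | h
  · simp [h]
  · rw [Nat.mod_eq_of_lt (by omega)]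
    simp [h]

lemma key_min (hn : 2 ≤ n) (a : Fin n) :
    min ((a + 1)).val (-(a + 1)).val ≤ min a.val (-a).val + 1 := by
  have h1 := val_add_one' hn a
  have h2 := val_neg' a
  have h3 := val_neg' (a + 1)
  have := a.isLt
  have h4 := (a+1).isLt
  split_ifs at h1 h2 h3 <;> omega

lemma eq_one_of_val_eq_one (hn : 2 ≤ n) {a : Fin n} (h : a.val = 1) : a = 1 :=
  Fin.val_injective (by rw [h, val_one'' hn])

lemma walk_lower {x y : Fin n} (hn : 2 ≤ n) (w : (cycleGraph n).Walk x y) :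
    min (y - x).val (x - y).val ≤ w.length := by
  induction w with
  | nil => simp
  | @cons x z y h w ih =>
    rw [cycleGraph_adj'] at h
    have hzx : z = x + 1 ∨ z = x - 1 := by
      rcases h with h | h
      · right
        have h2 : x - z = 1 := eq_one_of_val_eq_one hn h
        have : z = x - (x - z) := by ring
        rw [h2] at this
        exact this
      · left
        have h2 : z - x = 1 := eq_one_of_val_eq_one hn h
        have : z = x + (z - x) := by ring
        rw [h2] at this
        exact this
    rw [Walk.length_cons]
    obtain h' | h' := hzx <;> subst h'
    · have hk := key_min hn (y - (x+1))
      have e1 : y - (x + 1) + 1 = y - x := by ring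
      have e2 : -(y - (x+1) + 1) = x - y := by ring_nf
      have e3 : -(y - (x+1)) = (x+1) - y := by ring
      rw [e2, e1, e3] at hk
      omega
    · have hk := key_min hn (-(y - (x-1)))
      have e1 : -(y - (x-1)) + 1 = x - y := by ring_nf
      have e2 : -(-(y - (x-1)) + 1) = y - x := by ring_nf
      have e3 : -(-(y - (x-1))) = y - (x - 1) := by ring
      have e4 : -(y - (x-1)) = x - 1 - y := by ring
      rw [e2, e1, e3, e4] at hk
      omega

lemma dist_le_nat (hn : 2 ≤ n) (x : Fin n) (k : ℕ) :
    (cycleGraph n).dist x (x + (k : Fin n)) ≤ k := by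
  induction k with
  | zero => simp
  | succ k ih =>
    have hadj : (cycleGraph n).Adj (x + (k : Fin n)) (x + ((k+1 : ℕ) : Fin n)) := by
      rw [cycleGraph_adj']
      right
      have e : x + ((k+1 : ℕ) : Fin n) - (x + (k : Fin n)) = 1 := by
        push_cast
        ring
      rw [e, val_one'' hn]
    have hconn : (cycleGraph n).Connected := by
      rcases n with _ | m
      · exact absurd rfl (NeZero.ne 0)
      · exact cycleGraph_connected
    have htri := hconn.dist_triangle
      (u := x) (v := x + (k : Fin n)) (w := x + ((k+1:ℕ) : Fin n))
    have hd : (cycleGraph n).dist (x + (k : Fin n)) (x + ((k+1:ℕ) : Fin n)) ≤ 1 :=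
      dist_le (Walk.cons hadj Walk.nil)
    omega

theorem cycle_dist (hn : 2 ≤ n) (x y : Fin n) :
    (cycleGraph n).dist x y = min (y - x).val (x - y).val := by
  apply le_antisymm
  · apply le_min
    · have h := dist_le_nat hn x (y - x).val
      rwa [Fin.cast_val_eq_self, add_sub_cancel] at h
    · have h := dist_le_nat hn y (x - y).val
      rwa [Fin.cast_val_eq_self, add_sub_cancel, dist_comm] at h
  · have hr : (cycleGraph n).Reachable x y := cycleGraph_preconnected (n := n) x y
    obtain ⟨w, hw⟩ := hr.exists_walk_length_eq_dist
    rw [← hw]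
    exact walk_lower hn w

end CycleDist

namespace CyclePart1

open SimpleGraph Finset Broadcast CycleDist

variable {n : ℕ} [NeZero n]

lemma val_sub_one' (hn : 2 ≤ n) (a : Fin n) :
    (a - 1).val = if a.val = 0 then n - 1 else a.val - 1 := by
  have h : a - 1 = a + (-1) := by ring
  rw [h, Fin.val_add, val_neg' (1 : Fin n), val_one'' hn, if_neg (by omega : ¬(1:ℕ) = 0)]
  have := a.isLt
  rcases eq_or_ne a.val 0 with h' | h'
  · rw [if_pos h', h', Nat.zero_add, Nat.mod_eq_of_lt (by omega)]
  · rw [if_neg h']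
    have : a.val + (n - 1) = n + (a.val - 1) := by omega
    rw [this, Nat.add_mod_left, Nat.mod_eq_of_lt (by omega)]

lemma dist_succ (hn : 2 ≤ n) (x : Fin n) : (cycleGraph n).dist x (x + 1) = 1 := by
  rw [cycle_dist hn]
  have e1 : x + 1 - x = 1 := by ring
  have e2 : x - (x + 1) = -1 := by ring
  rw [e1, e2, val_one'' hn, val_neg' (1 : Fin n), val_one'' hn]
  rw [if_neg (by omega)]
  omega

lemma dist_pred (hn : 2 ≤ n) (x : Fin n) : (cycleGraph n).dist x (x - 1) = 1 := by
  have h : x - 1 + 1 = x := by ring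
  rw [SimpleGraph.dist_comm, ← h]
  nth_rewrite 1 [h]
  exact dist_succ hn (x - 1)

lemma one_le_ecc (hn : 2 ≤ n) (v : Fin n) : 1 ≤ ecc (cycleGraph n) v := by
  have h := dist_succ hn v
  calc 1 = (cycleGraph n).dist v (v + 1) := h.symm
    _ ≤ ecc (cycleGraph n) v := Finset.le_sup (Finset.mem_univ _)

lemma ecc_lt (hn : 2 ≤ n) (v : Fin n) : ecc (cycleGraph n) v < n := by
  apply Finset.sup_lt_iff (show (⊥ : ℕ) < n from Nat.pos_of_ne_zero (NeZero.ne n)) |>.2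
  intro u _
  rw [cycle_dist hn]
  have := (u - v).isLt
  omega

/-- The dominating broadcast: 1 on multiples of 3. -/
def f0 (n : ℕ) : Fin n → ℕ := fun v => if v.val % 3 = 0 then 1 else 0

lemma f0_broadcast (hn : 2 ≤ n) : IsBroadcast (cycleGraph n) (f0 n) := by
  intro v
  have := one_le_ecc hn v
  unfold f0
  split_ifs <;> omega

lemma f0_dominating (hn : 2 ≤ n) : IsDominating (cycleGraph n) (f0 n) := by
  refine ⟨f0_broadcast hn, ?_⟩
  intro u
  have hu := u.isLt
  have h3 : u.val % 3 = 0 ∨ u.val % 3 = 1 ∨ u.val % 3 = 2 := by omega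
  rcases h3 with h | h | h
  · exact ⟨u, by simp [f0, h], by simp [SimpleGraph.dist_self]⟩
  · refine ⟨u - 1, ?_, ?_⟩
    · have hval : (u - 1).val % 3 = 0 := by
        rw [val_sub_one' hn, if_neg (by omega)]
        omega
      simp [f0, hval]
    · have hval : (u - 1).val % 3 = 0 := by
        rw [val_sub_one' hn, if_neg (by omega)]
        omega
      have hd := dist_pred hn u
      simp [f0, hval, hd]
  · refine ⟨u + 1, ?_, ?_⟩
    · have hval : (u + 1).val % 3 = 0 := by
        rw [val_add_one' hn]
        split_ifs with h'
        · rfl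
        · omega
      simp [f0, hval]
    · have hval : (u + 1).val % 3 = 0 := by
        rw [val_add_one' hn]
        split_ifs with h'
        · rfl
        · omega
      have hd := dist_succ hn u
      simp [f0, hval, hd]

lemma sum_range_mult3 : ∀ m : ℕ, (∑ i ∈ Finset.range m, if i % 3 = 0 then 1 else 0) = (m + 2) / 3 := by
  intro m
  induction m with
  | zero => simp
  | succ m ih =>
    rw [Finset.sum_range_succ, ih]
    by_cases h : m % 3 = 0 <;> simp [h] <;> omega

lemma f0_cost : cost (f0 n) = (n + 2) / 3 := by
  unfold cost f0
  rw [Fin.sum_univ_eq_sum_range (fun i => if i % 3 = 0 then 1 else 0) n]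
  exact sum_range_mult3 n

end CyclePart1

namespace CycleCount

open SimpleGraph Finset Broadcast CycleDist CyclePart1

variable {n : ℕ} [NeZero n]

/-- broadcast vertices as a Finset -/
def Vp (f : Fin n → ℕ) : Finset (Fin n) := Finset.univ.filter (fun v => 1 ≤ f v)

/-- ball of radius f v around v -/
noncomputable def ballF (f : Fin n → ℕ) (v : Fin n) : Finset (Fin n) :=
  Finset.univ.filter (fun u => (cycleGraph n).dist u v ≤ f v)

/-- hears as a Finset -/
noncomputable def hearsFin (f : Fin n → ℕ) (u : Fin n) : Finset (Fin n) :=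
  Finset.univ.filter (fun w => 1 ≤ f w ∧ (cycleGraph n).dist u w ≤ f w)

lemma mem_hearsFin {f : Fin n → ℕ} {u w : Fin n} :
    w ∈ hearsFin f u ↔ w ∈ hears (cycleGraph n) f u := by
  simp [hearsFin, hears]

lemma card_ball_le (hn : 2 ≤ n) (f : Fin n → ℕ) (v : Fin n) :
    (ballF f v).card ≤ 2 * f v + 1 := by
  classical
  set emb : ℕ → Fin n := fun j => v - ((f v : ℕ) : Fin n) + ((j : ℕ) : Fin n) with hemb
  have hsub : ballF f v ⊆ (Finset.range (2 * f v + 1)).image emb := by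
    intro u hu
    rw [ballF, Finset.mem_filter] at hu
    rw [cycle_dist hn] at hu
    rcases min_le_iff.mp hu.2 with hc | hc
    · -- (v - u).val ≤ f v
      refine Finset.mem_image.2 ⟨f v - (v - u).val, Finset.mem_range.2 (by omega), ?_⟩
      rw [hemb]
      simp only []
      rw [Nat.cast_sub hc, Fin.cast_val_eq_self]
      ring
    · -- (u - v).val ≤ f v
      refine Finset.mem_image.2 ⟨f v + (u - v).val, Finset.mem_range.2 (by omega), ?_⟩
      rw [hemb]
      simp only []
      rw [Nat.cast_add, Fin.cast_val_eq_self]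
      ring
  calc (ballF f v).card ≤ ((Finset.range (2 * f v + 1)).image emb).card :=
        Finset.card_le_card hsub
    _ ≤ (Finset.range (2 * f v + 1)).card := Finset.card_image_le
    _ = 2 * f v + 1 := Finset.card_range _

lemma sum_ball_eq (f : Fin n → ℕ) :
    ∑ v ∈ Vp f, (ballF f v).card = ∑ u : Fin n, (hearsFin f u).card := by
  classical
  have h1 : ∀ v, (ballF f v).card =
      ∑ u : Fin n, if (cycleGraph n).dist u v ≤ f v then 1 else 0 := by
    intro v
    rw [ballF, Finset.card_filter]
  have h2 : ∀ u, (hearsFin f u).card =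
      ∑ v ∈ Vp f, if (cycleGraph n).dist u v ≤ f v then 1 else 0 := by
    intro u
    rw [hearsFin, Finset.card_filter, Vp, Finset.sum_filter]
    apply Finset.sum_congr rfl
    intro v _
    by_cases hv : 1 ≤ f v <;> by_cases hd : (cycleGraph n).dist u v ≤ f v <;>
      simp [hv, hd]
  simp only [h1, h2]
  exact Finset.sum_comm

lemma sum_Vp_eq_cost (f : Fin n → ℕ) : ∑ v ∈ Vp f, f v = cost f := by
  rw [Vp, cost]
  exact Finset.sum_filter_of_ne (fun x _ h => by omega)

lemma card_Vp_le_cost (f : Fin n → ℕ) : (Vp f).card ≤ cost f := by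
  rw [← sum_Vp_eq_cost]
  calc (Vp f).card = ∑ _v ∈ Vp f, 1 := by simp
    _ ≤ ∑ v ∈ Vp f, f v := Finset.sum_le_sum (fun v hv => (Finset.mem_filter.mp hv).2)

lemma sum_ball_le (hn : 2 ≤ n) (f : Fin n → ℕ) :
    ∑ v ∈ Vp f, (ballF f v).card ≤ 2 * cost f + (Vp f).card := by
  calc ∑ v ∈ Vp f, (ballF f v).card ≤ ∑ v ∈ Vp f, (2 * f v + 1) :=
        Finset.sum_le_sum (fun v _ => card_ball_le hn f v)
    _ = 2 * (∑ v ∈ Vp f, f v) + (Vp f).card := by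
        rw [Finset.sum_add_distrib, Finset.mul_sum]
        simp
    _ = 2 * cost f + (Vp f).card := by rw [sum_Vp_eq_cost]

lemma dominating_lower (hn : 2 ≤ n) {f : Fin n → ℕ}
    (hdom : IsDominating (cycleGraph n) f) : n ≤ 3 * cost f := by
  classical
  have hsub : (Finset.univ : Finset (Fin n)) ⊆ (Vp f).biUnion (ballF f) := by
    intro u _
    obtain ⟨w, hw⟩ := hdom.2 u
    exact Finset.mem_biUnion.2 ⟨w, Finset.mem_filter.2 ⟨Finset.mem_univ _, hw.1⟩,
      Finset.mem_filter.2 ⟨Finset.mem_univ _, hw.2⟩⟩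
  have h1 : n ≤ ((Vp f).biUnion (ballF f)).card := by
    have := Finset.card_le_card hsub
    rwa [Finset.card_univ, Fintype.card_fin] at this
  have h2 := Finset.card_biUnion_le (s := Vp f) (t := ballF f)
  have h3 := sum_ball_le hn f
  have h4 := card_Vp_le_cost f
  omega

theorem gammab_cycle (hn : 3 ≤ n) :
    broadcastDomination (cycleGraph n) = (n + 2) / 3 := by
  have hn2 : 2 ≤ n := by omega
  have hmem : ((n + 2) / 3) ∈ {c | ∃ f, IsDominating (cycleGraph n) f ∧ cost f = c} :=
    ⟨f0 n, f0_dominating hn2, f0_cost⟩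
  apply le_antisymm
  · exact Nat.sInf_le hmem
  · have hne : {c | ∃ f, IsDominating (cycleGraph n) f ∧ cost f = c}.Nonempty := ⟨_, hmem⟩
    obtain ⟨f, hf, hc⟩ := Nat.sInf_mem hne
    have := dominating_lower hn2 hf
    rw [broadcastDomination]
    omega

end CycleCount

namespace Broadcast

open SimpleGraph

variable {V : Type*} [Fintype V] {G : SimpleGraph V} {f g : V → ℕ}

lemma hears_mono (hle : ∀ v, f v ≤ g v) (u : V) : hears G f u ⊆ hears G g u := by
  intro w hw
  exact ⟨le_trans hw.1 (hle w), le_trans hw.2 (hle w)⟩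

lemma self_mem_hears {v : V} (hv : 1 ≤ f v) : v ∈ hears G f v :=
  ⟨hv, by simp [SimpleGraph.dist_self]⟩

theorem maximal_of_dominating_irredundant (hdom : IsDominating G f)
    (hirr : IsIrredundant G f) : IsMaximalIrredundant G f := by
  refine ⟨hirr, ?_⟩
  intro g hg hle
  by_contra hne
  have hex : ∃ v, f v < g v := by
    by_contra hno
    push_neg at hno
    exact hne (funext fun v => le_antisymm (hno v) (hle v))
  obtain ⟨v, hv⟩ := hex
  have key : ∀ u, u ∈ privateNbhd G g v → hears G f u = {v} := by
    intro u hu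
    have h1 : hears G f u ⊆ {v} := by
      rw [← hu]
      exact hears_mono hle u
    obtain ⟨w, hw⟩ := hdom.2 u
    have := h1 hw
    rw [Set.mem_singleton_iff] at this
    subst this
    exact Set.eq_singleton_iff_unique_mem.2 ⟨hw, fun x hx => h1 hx⟩
  have hPB := hg.2 v (by omega)
  unfold privateBorder at hPB
  split_ifs at hPB with hc
  · -- special case: g v = 1 and PN_g v = {v}
    have hvPN : v ∈ privateNbhd G g v := by rw [hc.2]; rfl
    have := key v hvPN
    have hfv : 1 ≤ f v := by
      have : v ∈ hears G f v := by rw [this]; rfl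
      exact this.1
    omega
  · obtain ⟨u, hu⟩ := hPB
    have h2 := key u hu.1
    have h3 : v ∈ hears G f u := by rw [h2]; rfl
    have h4 := h3.2
    have h5 := hu.2
    omega

lemma cost_lt_of_le_of_ne (hle : ∀ v, g v ≤ f v) (hne : g ≠ f) : cost g < cost f := by
  have hex : ∃ v, g v < f v := by
    by_contra hno
    push_neg at hno
    exact hne (funext fun v => le_antisymm (hle v) (hno v))
  obtain ⟨v, hv⟩ := hex
  exact Finset.sum_lt_sum (fun i _ => hle i) ⟨v, Finset.mem_univ v, hv⟩

lemma exists_minimal_dominating_aux :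
    ∀ (k : ℕ) (f : V → ℕ), cost f ≤ k → IsDominating G f →
      ∃ f', IsMinimalDominating G f' ∧ ∀ v, f' v ≤ f v := by
  intro k
  induction k with
  | zero =>
    intro f hc hf
    refine ⟨f, ⟨hf, fun g hg hle => ?_⟩, fun v => le_refl _⟩
    by_contra hne
    have := cost_lt_of_le_of_ne hle hne
    omega
  | succ k ih =>
    intro f hc hf
    by_cases h : ∀ g, IsDominating G g → (∀ v, g v ≤ f v) → g = f
    · exact ⟨f, ⟨hf, h⟩, fun v => le_refl _⟩
    · push_neg at h
      obtain ⟨g, hg, hle, hne⟩ := h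
      have hlt := cost_lt_of_le_of_ne hle hne
      obtain ⟨f', hf', hle'⟩ := ih g (by omega) hg
      exact ⟨f', hf', fun v => le_trans (hle' v) (hle v)⟩

lemma exists_minimal_dominating (hf : IsDominating G f) :
    ∃ f', IsMinimalDominating G f' ∧ ∀ v, f' v ≤ f v :=
  exists_minimal_dominating_aux (cost f) f (le_refl _) hf

theorem irredundant_of_minimal_dominating (hconn : G.Connected)
    (h : IsMinimalDominating G f) : IsIrredundant G f := by
  classical
  refine ⟨h.1.1, ?_⟩
  intro v hv
  by_contra hPB
  rw [Set.not_nonempty_iff_eq_empty] at hPB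
  set g := Function.update f v (f v - 1) with hgdef
  have hgv : g v = f v - 1 := by simp [hgdef]
  have hgw : ∀ w, w ≠ v → g w = f w := by
    intro w hw
    simp [hgdef, Function.update_of_ne hw]
  have hgle : ∀ w, g w ≤ f w := by
    intro w
    by_cases hw : w = v
    · subst hw; omega
    · rw [hgw w hw]
  have hdom : IsDominating G g := by
    refine ⟨fun w => le_trans (hgle w) (h.1.1 w), ?_⟩
    intro u
    obtain ⟨w, hw⟩ := h.1.2 u
    by_cases hwv : w = v
    · subst hwv
      -- u hears v under f
      by_cases hother : ∃ w', w' ≠ w ∧ w' ∈ hears G f u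
      · obtain ⟨w', hne', hw'⟩ := hother
        exact ⟨w', ⟨by rw [hgw w' hne']; exact hw'.1, by rw [hgw w' hne']; exact hw'.2⟩⟩
      · -- hears f u = {w}
        push_neg at hother
        have hsing : hears G f u = {w} := by
          apply Set.eq_singleton_iff_unique_mem.2
          refine ⟨hw, fun x hx => ?_⟩
          by_contra hxne
          exact hother x hxne hx
        have hPN : u ∈ privateNbhd G f w := hsing
        unfold privateBorder at hPB
        split_ifs at hPB with hcond
        · exact absurd hPB (Set.singleton_ne_empty _)
        · -- non-special: border set empty
          have hub : G.dist u w ≠ f w := by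
            intro hd
            have : u ∈ (∅ : Set V) := hPB ▸ (⟨hPN, hd⟩ : u ∈ {x | x ∈ privateNbhd G f w ∧ G.dist x w = f w})
            exact this
          by_cases hfw1 : f w = 1
          · -- then PN f w ≠ {w} (from hcond) but we derive PN = {w}: contradiction
            exfalso
            have hPNsub : privateNbhd G f w ⊆ {w} := by
              intro x hx
              have hx' : hears G f x = {w} := hx
              have hxh : w ∈ hears G f x := by rw [hx']; rfl
              have hdx : G.dist x w ≤ 1 := by
                have h1 := hxh.2
                have h2 := hxh.1
                omega
              have hdx' : G.dist x w ≠ f w := by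
                intro hd
                have : x ∈ (∅ : Set V) := hPB ▸ (⟨hx, hd⟩ : x ∈ {y | y ∈ privateNbhd G f w ∧ G.dist y w = f w})
                exact this
              have : G.dist x w = 0 := by omega
              rw [hconn.dist_eq_zero_iff] at this
              exact this
            have huw : u = w := hPNsub hPN
            subst huw
            exact hcond ⟨hfw1, Set.Subset.antisymm hPNsub (by rintro x rfl; exact hPN)⟩
          · -- f w ≥ 2, so d u w ≤ f w - 1, g w = f w - 1 ≥ 1
            have hfw2 : 2 ≤ f w := by
              have := hw.1; omega
            have hd : G.dist u w ≤ f w - 1 := by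
              have := hw.2; omega
            have hd1 : 1 ≤ g w := by rw [hgv]; omega
            have hd2 : G.dist u w ≤ g w := by rw [hgv]; omega
            exact ⟨w, hd1, hd2⟩
    · exact ⟨w, ⟨by rw [hgw w hwv]; exact hw.1, by rw [hgw w hwv]; exact hw.2⟩⟩
  have := h.2 g hdom hgle
  have : g v = f v := by rw [this]
  omega

theorem exists_maximal_irredundant_of_dominating (hconn : G.Connected)
    (hf : IsDominating G f) :
    ∃ f', IsMaximalIrredundant G f' ∧ cost f' ≤ cost f := by
  obtain ⟨f', hmin, hle⟩ := exists_minimal_dominating hf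
  have hirr := irredundant_of_minimal_dominating hconn hmin
  exact ⟨f', maximal_of_dominating_irredundant hmin.1 hirr,
    Finset.sum_le_sum fun i _ => hle i⟩

end Broadcast

namespace CycleIrr

open SimpleGraph Finset Broadcast CycleDist CyclePart1 CycleCount

variable {n : ℕ} [NeZero n]

lemma val_add_neg {a : Fin n} (ha : a ≠ 0) : a.val + (-a).val = n := by
  have h := val_neg' a
  have h0 : a.val ≠ 0 := fun hc => ha (Fin.val_injective (by simp [hc]))
  have := a.isLt
  rw [h, if_neg h0]
  omega

lemma val_eq_zero_iff {a : Fin n} : a.val = 0 ↔ a = 0 := by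
  constructor
  · intro h; exact Fin.val_injective (by simp [h])
  · intro h; simp [h]

lemma near_decomp (hn : 2 ≤ n) {x u : Fin n} (h : (cycleGraph n).dist x u ≤ 1) :
    x = u ∨ x = u - 1 ∨ x = u + 1 := by
  rw [cycle_dist hn] at h
  rcases min_le_iff.mp h with hc | hc
  · interval_cases hv : (u - x).val
    · left
      have : u - x = 0 := val_eq_zero_iff.mp hv
      have : x = u - (u - x) := by ring
      simpa [val_eq_zero_iff.mp hv] using this
    · right; left
      have h1 : u - x = 1 := eq_one_of_val_eq_one hn hv
      have : x = u - (u - x) := by ring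
      rw [h1] at this
      exact this
  · interval_cases hv : (x - u).val
    · left
      have : x = u + (x - u) := by ring
      simpa [val_eq_zero_iff.mp hv] using this
    · right; right
      have h1 : x - u = 1 := eq_one_of_val_eq_one hn hv
      have : x = u + (x - u) := by ring
      rw [h1] at this
      exact this

lemma dist_of_vals (hn : 2 ≤ n) (x y : Fin n) :
    (cycleGraph n).dist x y = min (y - x).val (x - y).val := cycle_dist hn x y

/-- The key blocking lemma: if `f` is a maximal irredundant broadcast on the cycle and
`u` is undominated, then some broadcast vertex `v` has a singleton private border
located right next to `u`, on the far side of `v`'s ball. -/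
lemma blocking (hn : 3 ≤ n) {f : Fin n → ℕ}
    (hmax : IsMaximalIrredundant (cycleGraph n) f)
    {u : Fin n} (hu : hears (cycleGraph n) f u = ∅) :
    ∃ v p : Fin n, 1 ≤ f v ∧ 2 * f v < n ∧
      privateBorder (cycleGraph n) f v = {p} ∧
      (((p - v).val = f v ∧ u = p + 1) ∨ ((v - p).val = f v ∧ u = p - 1)) ∧
      (f v = 1 → ∃ w, w ≠ v ∧ w ∈ hears (cycleGraph n) f v) := by
  classical
  have hn2 : 2 ≤ n := by omega
  set G := cycleGraph n with hG
  -- u has zero value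
  have hfu : f u = 0 := by
    by_contra hc
    have : u ∈ hears G f u := self_mem_hears (by omega)
    rw [hu] at this
    exact this
  -- all balls are proper
  have hsmall : ∀ v, 1 ≤ f v → 2 * f v < n := by
    intro v hv
    by_contra hc
    push_neg at hc
    have hvne : v ≠ u := fun h => by rw [h] at hv; omega
    have hd : G.dist u v ≤ f v := by
      rw [hG, dist_of_vals hn2]
      have h0 : v - u ≠ 0 := fun h => hvne (by
        have : v = u + (v - u) := by ring
        simpa [h] using this)
      have := val_add_neg h0
      have hval : (u - v) = -(v - u) := by ring
      rw [hval]
      omega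
    have : v ∈ hears G f u := ⟨hv, hd⟩
    rw [hu] at this
    exact this
  -- the perturbed broadcast g
  set g := Function.update f u 1 with hgdef
  have hgu : g u = 1 := by simp [hgdef]
  have hgw : ∀ w, w ≠ u → g w = f w := fun w hw => by
    simp [hgdef, Function.update_of_ne hw]
  have hge : ∀ w, f w ≤ g w := by
    intro w
    by_cases hw : w = u
    · subst hw; omega
    · rw [hgw w hw]
  have hbg : IsBroadcast G g := by
    intro w
    by_cases hw : w = u
    · subst hw
      rw [hgu]
      exact one_le_ecc hn2 w
    · rw [hgw w hw]
      exact hmax.1.1 w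
  have hgne : g ≠ f := by
    intro h
    have := congrFun h u
    rw [hgu, hfu] at this
    exact absurd this one_ne_zero
  -- by maximality, g is not irredundant
  have hnirr : ¬ IsIrredundant G g := fun hi => hgne (hmax.2 g hi hge)
  rw [IsIrredundant] at hnirr
  push_neg at hnirr
  obtain ⟨v, hv1, hvPB⟩ := hnirr hbg
  -- u never hears anything under f
  have hunof : ∀ x, u ∉ hears G f x := fun x hx => by
    have := hx.1
    omega
  -- description of hears under g
  have hhg : ∀ x, hears G g x =
      if G.dist x u ≤ 1 then insert u (hears G f x) else hears G f x := by
    intro x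
    ext w
    by_cases hw : w = u
    · subst hw
      constructor
      · intro hmem
        have hd : G.dist x w ≤ 1 := by
          have := hmem.2
          rw [hgu] at this
          exact this
        rw [if_pos hd]
        exact Set.mem_insert _ _
      · intro hmem
        split_ifs at hmem with hd
        · exact ⟨by rw [hgu], by rw [hgu]; exact hd⟩
        · exact absurd hmem (hunof x)
    · have hgweq := hgw w hw
      constructor
      · intro hmem
        have hf : w ∈ hears G f x := ⟨by rw [← hgweq]; exact hmem.1,
          by rw [← hgweq]; exact hmem.2⟩
        split_ifs
        · exact Set.mem_insert_of_mem _ hf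
        · exact hf
      · intro hmem
        have hf : w ∈ hears G f x := by
          split_ifs at hmem with hd
          · rcases Set.mem_insert_iff.mp hmem with h | h
            · exact absurd h hw
            · exact h
          · exact hmem
        exact ⟨by rw [hgweq]; exact hf.1, by rw [hgweq]; exact hf.2⟩
  have hhgu : hears G g u = {u} := by
    rw [hhg u]
    rw [if_pos (by rw [hG, dist_of_vals hn2]; simp), hu]
    simp
  -- distances from u±1 to u are 1
  have hdsucc : G.dist (u + 1) u = 1 := by
    rw [hG, SimpleGraph.dist_comm]
    exact dist_succ hn2 u
  have hdpred : G.dist (u - 1) u = 1 := by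
    rw [hG, SimpleGraph.dist_comm]
    exact dist_pred hn2 u
  have hne_pm : u - 1 ≠ u + 1 := by
    intro h
    have h2 : (u + 1) - (u - 1) = 2 := by ring
    rw [← h] at h2
    have : ((0 : Fin n)).val = (2 : Fin n).val := by
      rw [show u - 1 - (u - 1) = 0 by ring] at h2
      rw [h2]
    have hv2 : ((2 : Fin n)).val = 2 := by
      have h21 : (2 : Fin n) = 1 + 1 := by norm_num
      rw [h21, val_add_one' hn2, val_one'' hn2, if_neg (by omega)]
    rw [hv2] at this
    simp at this
  have hne_p : u + 1 ≠ u := by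
    intro h
    have : (u + 1) - u = 0 := by rw [h]; ring
    have h1 : (u + 1) - u = 1 := by ring
    rw [h1] at this
    have := congrArg Fin.val this
    rw [val_one'' hn2] at this
    simp at this
  have hne_m : u - 1 ≠ u := by
    intro h
    have : u - (u - 1) = 0 := by rw [h]; ring
    have h1 : u - (u - 1) = 1 := by ring
    rw [h1] at this
    have := congrArg Fin.val this
    rw [val_one'' hn2] at this
    simp at this
  -- v ≠ u: the private border of u under g is nonempty
  have hPBu : (privateBorder G g u).Nonempty := by
    have huPN : u ∈ privateNbhd G g u := by
      show hears G g u = {u}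
      exact hhgu
    by_cases hA : hears G f (u + 1) = ∅ ∨ hears G f (u - 1) = ∅
    · -- some undominated neighbor
      obtain ⟨u', hu'd, hu'ne, hu'emp⟩ :
          ∃ u', G.dist u' u = 1 ∧ u' ≠ u ∧ hears G f u' = ∅ := by
        rcases hA with h | h
        · exact ⟨u + 1, hdsucc, hne_p, h⟩
        · exact ⟨u - 1, hdpred, hne_m, h⟩
      have hu'PN : u' ∈ privateNbhd G g u := by
        show hears G g u' = {u}
        rw [hhg u', if_pos (by omega), hu'emp]
        simp
      unfold privateBorder
      split_ifs with hc
      · exact ⟨u, rfl⟩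
      · exact ⟨u', hu'PN, by rw [hu'd, hgu]⟩
    · -- both neighbors dominated
      push_neg at hA
      have hPNeq : privateNbhd G g u = {u} := by
        apply Set.eq_singleton_iff_unique_mem.2
        refine ⟨huPN, ?_⟩
        intro x hx
        have hx' : hears G g x = {u} := hx
        have hxd : G.dist x u ≤ 1 := by
          have : u ∈ hears G g x := by rw [hx']; rfl
          have := this.2
          rw [hgu] at this
          exact this
        have hfx : hears G f x = ∅ := by
          rw [hhg x, if_pos hxd] at hx'
          by_contra hfc
          obtain ⟨w, hw⟩ := Set.nonempty_iff_ne_empty.2 hfc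
          have : w ∈ insert u (hears G f x) := Set.mem_insert_of_mem _ hw
          rw [hx'] at this
          rw [Set.mem_singleton_iff] at this
          subst this
          exact hunof x hw
        rcases near_decomp hn2 hxd with h | h | h
        · exact h
        · rw [h] at hfx
          exact absurd hfx (Set.nonempty_iff_ne_empty.mp hA.2)
        · rw [h] at hfx
          exact absurd hfx (Set.nonempty_iff_ne_empty.mp hA.1)
      unfold privateBorder
      rw [if_pos ⟨hgu, hPNeq⟩]
      exact ⟨u, rfl⟩
  have hvu : v ≠ u := by
    intro h
    subst h
    rw [hvPB] at hPBu
    exact Set.not_nonempty_empty hPBu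
  have hfv1 : 1 ≤ f v := by
    have := hgw v hvu
    omega
  have h2fv : 2 * f v < n := hsmall v hfv1
  have hgvfv : g v = f v := hgw v hvu
  -- the private neighborhood of v under g
  have hPNg : privateNbhd G g v = {x | x ∈ privateNbhd G f v ∧ ¬ G.dist x u ≤ 1} := by
    ext x
    constructor
    · intro hx
      have hx' : hears G g x = {v} := hx
      have hdx : ¬ G.dist x u ≤ 1 := by
        intro hd
        rw [hhg x, if_pos hd] at hx'
        have : u ∈ ({v} : Set (Fin n)) := by rw [← hx']; exact Set.mem_insert _ _
        exact hvu (Set.mem_singleton_iff.mp this).symm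
      refine ⟨?_, hdx⟩
      show hears G f x = {v}
      rw [hhg x, if_neg hdx] at hx'
      exact hx'
    · rintro ⟨hx, hdx⟩
      show hears G g x = {v}
      rw [hhg x, if_neg hdx]
      exact hx
  -- distance from v to u is more than f v
  have hdvu : ¬ G.dist v u ≤ f v := by
    intro hd
    have : v ∈ hears G f u := ⟨hfv1, by rw [SimpleGraph.dist_comm]; exact hd⟩
    rw [hu] at this
    exact this
  have hdvu1 : ¬ G.dist v u ≤ 1 := fun hd => hdvu (le_trans hd hfv1)
  -- f's border at v is not in the special case
  have hnsf : ¬ (f v = 1 ∧ privateNbhd G f v = {v}) := by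
    rintro ⟨h1, h2⟩
    have : privateNbhd G g v = {v} := by
      rw [hPNg, h2]
      ext x
      constructor
      · rintro ⟨hx, _⟩; exact hx
      · rintro rfl
        exact ⟨rfl, hdvu1⟩
    have hsp : g v = 1 ∧ privateNbhd G g v = {v} := ⟨by omega, this⟩
    have : privateBorder G g v = {v} := by
      unfold privateBorder
      rw [if_pos hsp]
    rw [hvPB] at this
    exact Set.singleton_ne_empty v this.symm
  have hnsg : ¬ (g v = 1 ∧ privateNbhd G g v = {v}) := by
    rintro hsp
    have : privateBorder G g v = {v} := by
      unfold privateBorder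
      rw [if_pos hsp]
    rw [hvPB] at this
    exact Set.singleton_ne_empty v this.symm
  -- the border of v under f is forced close to u
  have hborder : ∀ x, x ∈ privateNbhd G f v → G.dist x v = f v → G.dist x u ≤ 1 := by
    intro x hx hdx
    by_contra hdc
    have hxPNg : x ∈ privateNbhd G g v := by
      rw [hPNg]
      exact ⟨hx, hdc⟩
    have : x ∈ privateBorder G g v := by
      unfold privateBorder
      rw [if_neg hnsg]
      exact ⟨hxPNg, by rw [hgvfv]; exact hdx⟩
    rw [hvPB] at this
    exact this
  have hPBf : privateBorder G f v = {x | x ∈ privateNbhd G f v ∧ G.dist x v = f v} := by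
    unfold privateBorder
    rw [if_neg hnsf]
  have hPBne := hmax.1.2 v hfv1
  -- every border element is u-1 or u+1
  have hmem_pm : ∀ x, x ∈ privateBorder G f v → x = u - 1 ∨ x = u + 1 := by
    intro x hx
    rw [hPBf] at hx
    have hd1 := hborder x hx.1 hx.2
    rcases near_decomp hn2 hd1 with h | h | h
    · exfalso
      subst h
      have : hears G f x = {v} := hx.1
      rw [hu] at this
      exact Set.singleton_ne_empty v this.symm
    · exact Or.inl h
    · exact Or.inr h
  -- arithmetic setup
  have hcne : u - v ≠ 0 := fun h => hvu (by
    have h2 : u = v + (u - v) := by ring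
    rw [h, add_zero] at h2
    exact h2.symm)
  have havn : (u - v).val + (v - u).val = n := by
    have h1 : (v - u) = -(u - v) := by ring
    rw [h1]
    exact val_add_neg hcne
  have hane : (u - v).val ≠ 0 := fun h => hcne (val_eq_zero_iff.mp h)
  have halt : (u - v).val < n := (u - v).isLt
  have hdist_lo : f v < (u - v).val ∧ f v < (v - u).val := by
    have hduv : ¬ G.dist u v ≤ f v := by
      intro hd
      exact hdvu (by rwa [SimpleGraph.dist_comm] at hd)
    rw [hG, dist_of_vals hn2] at hduv
    omega
  have hsplit : ∀ x : Fin n, G.dist x v = f v → (x - v).val = f v ∨ (v - x).val = f v := by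
    intro x hx
    rw [hG, dist_of_vals hn2] at hx
    omega
  have helt_eq : ∀ y : Fin n, (y - v).val = (u - v).val → y = u := by
    intro y hy
    have h1 : y = v + (y - v) := by ring
    have h2 : u = v + (u - v) := by ring
    rw [h1, h2, Fin.val_injective hy]
  -- val computations for u-1 and u+1 relative to v
  have e1 : ((u - 1) - v).val = (u - v).val - 1 := by
    have h1 : (u - 1) - v = (u - v) - 1 := by ring
    rw [h1, val_sub_one' hn2, if_neg hane]
  have e2 : (v - (u - 1)).val = if (u - v).val - 1 = 0 then 0 else n - ((u - v).val - 1) := by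
    have h1 : v - (u - 1) = -((u - v) - 1) := by ring
    rw [h1, val_neg']
    have h2 : ((u - v) - 1).val = (u - v).val - 1 := by
      rw [val_sub_one' hn2, if_neg hane]
    rw [h2]
  have e3 : ((u + 1) - v).val = if (u - v).val + 1 = n then 0 else (u - v).val + 1 := by
    have h1 : (u + 1) - v = (u - v) + 1 := by ring
    rw [h1, val_add_one' hn2]
  have e4 : (v - (u + 1)).val =
      if ((u + 1) - v).val = 0 then 0 else n - ((u + 1) - v).val := by
    have h1 : v - (u + 1) = -((u + 1) - v) := by ring
    rw [h1, val_neg']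
  by_cases hboth : u - 1 ∈ privateBorder G f v ∧ u + 1 ∈ privateBorder G f v
  · -- exceptional case: border is both neighbours of u; derive a contradiction
    exfalso
    have hdm : G.dist (u - 1) v = f v := by
      have := hboth.1
      rw [hPBf] at this
      exact this.2
    have hdp : G.dist (u + 1) v = f v := by
      have := hboth.2
      rw [hPBf] at this
      exact this.2
    have hm := hsplit _ hdm
    have hp := hsplit _ hdp
    have hkey : (u - v).val = f v + 1 ∧ n = 2 * f v + 2 := by
      rw [e1, e2] at hm
      rw [e3, e4] at hp
      rw [e3] at hp
      split_ifs at hm hp <;> omega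
    -- every vertex except u is within distance f v of v
    have hExcB : ∀ y : Fin n, G.dist y v ≤ f v + 1 := by
      intro y
      rw [hG, dist_of_vals hn2]
      by_cases hyv : y = v
      · subst hyv
        simp
      · have hyne : y - v ≠ 0 := fun h => hyv (by
          have h2 : y = v + (y - v) := by ring
          rw [h, add_zero] at h2
          exact h2)
        have h1 : (y - v) = -(v - y) := by ring
        have hsum : (v - y).val + (y - v).val = n := by
          rw [h1]
          exact val_add_neg (by rw [h1] at hyne; exact fun hz => hyne (by rw [hz, neg_zero]))
        have := (y - v).isLt
        have h0 : (y - v).val ≠ 0 := fun h => hyne (val_eq_zero_iff.mp h)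
        omega
    have hExcA : ∀ y : Fin n, y ≠ u → G.dist y v ≤ f v := by
      intro y hy
      rw [hG, dist_of_vals hn2]
      by_cases hyv : y = v
      · subst hyv
        simp
      · have hyne : y - v ≠ 0 := fun h => hyv (by
          have h2 : y = v + (y - v) := by ring
          rw [h, add_zero] at h2
          exact h2)
        have h1 : (y - v) = -(v - y) := by ring
        have hsum : (v - y).val + (y - v).val = n := by
          rw [h1]
          exact val_add_neg (by rw [h1] at hyne; exact fun hz => hyne (by rw [hz, neg_zero]))
        have := (y - v).isLt
        have h0 : (y - v).val ≠ 0 := fun h => hyne (val_eq_zero_iff.mp h)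
        have hnea : (y - v).val ≠ (u - v).val := fun h => hy (helt_eq y h)
        omega
    -- v is the only broadcast vertex
    have hVponly : ∀ w, 1 ≤ f w → w = v := by
      intro w hw
      by_contra hwv
      obtain ⟨y, hy⟩ := hmax.1.2 w hw
      have hyPN : y ∈ privateNbhd G f w := by
        unfold privateBorder at hy
        split_ifs at hy with hc
        · rw [Set.mem_singleton_iff] at hy
          subst hy
          rw [hc.2]
          rfl
        · exact hy.1
      have hyh : hears G f y = {w} := hyPN
      have hyu : y ≠ u := by
        intro h
        subst h
        rw [hu] at hyh
        exact Set.singleton_ne_empty w hyh.symm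
      have hvy : v ∈ hears G f y := ⟨hfv1, hExcA y hyu⟩
      rw [hyh, Set.mem_singleton_iff] at hvy
      exact hwv hvy.symm
    -- the bigger broadcast at v
    set h2 := Function.update f v (f v + 1) with hh2def
    have hh2v : h2 v = f v + 1 := by simp [hh2def]
    have hh2w : ∀ w, w ≠ v → h2 w = f w := fun w hw => by
      simp [hh2def, Function.update_of_ne hw]
    have hh2ge : ∀ w, f w ≤ h2 w := by
      intro w
      by_cases hw : w = v
      · subst hw; omega
      · rw [hh2w w hw]
    have hduveq : G.dist v u = f v + 1 := by
      rw [hG, dist_of_vals hn2]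
      omega
    have hbh2 : IsBroadcast G h2 := by
      intro w
      by_cases hw : w = v
      · subst hw
        rw [hh2v, ← hduveq]
        exact Finset.le_sup (Finset.mem_univ u)
      · rw [hh2w w hw]
        exact hmax.1.1 w
    have hallhear : ∀ x : Fin n, hears G h2 x = {v} := by
      intro x
      ext w
      constructor
      · intro hmem
        by_contra hwv
        rw [Set.mem_singleton_iff] at hwv
        have h1 : 1 ≤ f w := by
          have := hmem.1
          rw [hh2w w hwv] at this
          exact this
        exact hwv (hVponly w h1)
      · intro hmem
        rw [Set.mem_singleton_iff] at hmem
        subst hmem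
        refine ⟨by omega, ?_⟩
        rw [hh2v]
        exact hExcB x
    have hirr2 : IsIrredundant G h2 := by
      refine ⟨hbh2, ?_⟩
      intro w hw
      have hwv : w = v := by
        by_cases h : w = v
        · exact h
        · rw [hh2w w h] at hw
          exact hVponly w hw
      subst hwv
      have hPN2 : u ∈ privateNbhd G h2 w := by
        show hears G h2 u = {w}
        exact hallhear u
      refine ⟨u, ?_⟩
      unfold privateBorder
      rw [if_neg (by rw [hh2v]; rintro ⟨h1, _⟩; omega)]
      refine ⟨hPN2, ?_⟩
      rw [hh2v, SimpleGraph.dist_comm]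
      exact hduveq
    have := hmax.2 h2 hirr2 hh2ge
    have := congrFun this v
    rw [hh2v] at this
    omega
  · -- main case: the border is a single vertex next to u
    obtain ⟨p0, hp0⟩ := hPBne
    have hp0pm := hmem_pm p0 hp0
    have hsingle : privateBorder G f v = {p0} := by
      apply Set.eq_singleton_iff_unique_mem.2
      refine ⟨hp0, ?_⟩
      intro y hy
      rcases hmem_pm y hy with h | h <;> rcases hp0pm with h' | h'
      · rw [h, h']
      · exfalso
        apply hboth
        refine ⟨by rwa [h] at hy, by rwa [h'] at hp0⟩
      · exfalso
        apply hboth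
        refine ⟨by rwa [h'] at hp0, by rwa [h] at hy⟩
      · rw [h, h']
    have hp0f : p0 ∈ privateNbhd G f v ∧ G.dist p0 v = f v := by
      rw [hPBf] at hp0
      exact hp0
    have hp0or := hsplit p0 hp0f.2
    have hup : u = p0 + 1 ∨ u = p0 - 1 := by
      rcases hp0pm with h | h
      · left
        rw [h]
        ring
      · right
        rw [h]
        ring
    have hp0ne : p0 - v ≠ 0 := by
      intro h
      have h2 : p0 = v + (p0 - v) := by ring
      rw [h, add_zero] at h2
      subst h2
      -- then dist p0 v = 0 = f v ≥ 1
      have := hp0f.2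
      rw [hG, dist_of_vals hn2] at this
      simp at this
      omega
    have hsumP : (p0 - v).val + (v - p0).val = n := by
      have h1 : (v - p0) = -(p0 - v) := by ring
      rw [h1]
      exact val_add_neg hp0ne
    -- the r = 1 side condition
    have hextra : f v = 1 → ∃ w, w ≠ v ∧ w ∈ hears G f v := by
      intro hr1
      by_contra hno
      push_neg at hno
      have hhv : hears G f v = {v} := by
        apply Set.eq_singleton_iff_unique_mem.2
        refine ⟨self_mem_hears hfv1, ?_⟩
        intro w hw
        by_contra hwv
        exact hno w hwv hw
      have hvPN : v ∈ privateNbhd G f v := hhv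
      have hPNgv : privateNbhd G g v = {v} := by
        rw [hPNg]
        apply Set.eq_singleton_iff_unique_mem.2
        constructor
        · exact ⟨hvPN, hdvu1⟩
        · rintro x ⟨hxPN, hxd⟩
          by_contra hxv
          have hxh : hears G f x = {v} := hxPN
          have hdxv : G.dist x v ≤ 1 := by
            have : v ∈ hears G f x := by rw [hxh]; rfl
            have := this.2
            omega
          have hdxv1 : G.dist x v = 1 := by
            rw [hG, dist_of_vals hn2] at hdxv ⊢
            have hxne : x - v ≠ 0 := by
              intro h
              have h2 : x = v + (x - v) := by ring
              rw [h, add_zero] at h2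
              exact hxv h2
            have h0 : (x - v).val ≠ 0 := fun h => hxne (val_eq_zero_iff.mp h)
            have hsum : (x - v).val + (v - x).val = n := by
              have h1 : (v - x) = -(x - v) := by ring
              rw [h1]
              exact val_add_neg hxne
            omega
          have hxPB : x ∈ privateBorder G f v := by
            rw [hPBf]
            exact ⟨hxPN, by rw [hdxv1, hr1]⟩
          rw [hsingle, Set.mem_singleton_iff] at hxPB
          subst hxPB
          rcases hp0pm with h | h <;> rw [h] at hxd
          · exact hxd (by rw [hdpred])
          · exact hxd (by rw [hdsucc])
      exact hnsg ⟨by rw [hgvfv, hr1], hPNgv⟩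
    refine ⟨v, p0, hfv1, h2fv, hsingle, ?_, hextra⟩
    rcases hp0or with hA | hA
    · -- (p0 - v).val = f v : u must be p0 + 1
      left
      refine ⟨hA, ?_⟩
      rcases hup with h | h
      · exact h
      · exfalso
        -- u = p0 - 1 gives dist u v = f v - 1 < f v, contradicting hdist_lo
        have h1 : u - v = (p0 - v) - 1 := by rw [h]; ring
        have h2 : (u - v).val = f v - 1 := by
          rw [h1, val_sub_one', if_neg (by omega)]
          · rw [hA]
          · exact hn2
        omega
    · -- (v - p0).val = f v : u must be p0 - 1
      right
      refine ⟨hA, ?_⟩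
      rcases hup with h | h
      · exfalso
        -- u = p0 + 1
        have h1 : u - v = (p0 - v) + 1 := by rw [h]; ring
        have h2 : (u - v).val = if (p0 - v).val + 1 = n then 0 else (p0 - v).val + 1 := by
          rw [h1, val_add_one' hn2]
        split_ifs at h2 <;> omega
      · exact h

end CycleIrr

namespace CycleIrr

open SimpleGraph Finset Broadcast CycleDist CyclePart1 CycleCount

variable {n : ℕ} [NeZero n]

theorem maxirr_lower (hn : 3 ≤ n) {f : Fin n → ℕ}
    (hmax : IsMaximalIrredundant (cycleGraph n) f) : n ≤ 3 * cost f := by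
  classical
  have hn2 : 2 ≤ n := by omega
  set G := cycleGraph n with hG
  set D := Finset.univ.filter (fun u : Fin n => (hears G f u).Nonempty) with hD
  set U := Finset.univ.filter (fun u : Fin n => ¬(hears G f u).Nonempty) with hU
  have hDU : D.card + U.card = n := by
    rw [hD, hU, Finset.card_filter_add_card_filter_not]
    simp
  have hUemp : ∀ u ∈ U, hears G f u = ∅ := by
    intro u hu
    rw [hU, Finset.mem_filter] at hu
    exact Set.not_nonempty_iff_eq_empty.mp hu.2
  set β : Fin n → Fin n := fun u =>
    if h : hears G f u = ∅ then (blocking hn hmax h).choose else u with hβ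
  have hspec : ∀ u ∈ U, ∃ p : Fin n, 1 ≤ f (β u) ∧ 2 * f (β u) < n ∧
      privateBorder G f (β u) = {p} ∧
      (((p - β u).val = f (β u) ∧ u = p + 1) ∨ ((β u - p).val = f (β u) ∧ u = p - 1)) ∧
      (f (β u) = 1 → ∃ w, w ≠ β u ∧ w ∈ hears G f (β u)) := by
    intro u hu
    have h := hUemp u hu
    rw [hβ]
    simp only [dif_pos h]
    exact (blocking hn hmax h).choose_spec
  -- injectivity of β on U
  have hinj : Set.InjOn β U := by
    intro u hu u' hu' heq
    obtain ⟨p, hp1, hp2, hp3, hp4, _⟩ := hspec u hu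
    obtain ⟨p', hq1, hq2, hq3, hq4, _⟩ := hspec u' hu'
    rw [heq] at hp3
    have hpp : p = p' := by
      have h : ({p} : Set (Fin n)) = {p'} := by rw [← hp3, hq3]
      exact Set.singleton_eq_singleton_iff.mp h
    subst hpp
    rw [heq] at hp4
    rcases hp4 with ⟨hL, hu1⟩ | ⟨hR, hu1⟩ <;> rcases hq4 with ⟨hL', hu2⟩ | ⟨hR', hu2⟩
    · rw [hu1, hu2]
    · exfalso
      have hpz : p - β u' ≠ 0 := by
        intro h
        rw [h] at hL
        simp at hL
        omega
      have hsum : (p - β u').val + (β u' - p).val = n := by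
        have h1 : (β u' - p) = -(p - β u') := by ring
        rw [h1]
        exact val_add_neg hpz
      omega
    · exfalso
      have hpz : p - β u' ≠ 0 := by
        intro h
        rw [h] at hL'
        simp at hL'
        omega
      have hsum : (p - β u').val + (β u' - p).val = n := by
        have h1 : (β u' - p) = -(p - β u') := by ring
        rw [h1]
        exact val_add_neg hpz
      omega
    · rw [hu1, hu2]
  set B := U.image β with hB
  have hBcard : B.card = U.card := Finset.card_image_of_injOn hinj
  have hBVp : B ⊆ Vp f := by
    intro v hv
    rw [hB, Finset.mem_image] at hv
    obtain ⟨u, hu, rfl⟩ := hv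
    obtain ⟨p, hp1, _⟩ := hspec u hu
    exact Finset.mem_filter.2 ⟨Finset.mem_univ _, hp1⟩
  set B1 := B.filter (fun v => f v = 1) with hB1
  set B2 := B.filter (fun v => ¬ f v = 1) with hB2
  have hB12 : B1.card + B2.card = B.card := by
    rw [hB1, hB2, Finset.card_filter_add_card_filter_not]
  -- B2 is paid for by excess radius
  have hsumVp : (∑ v ∈ Vp f, (f v - 1)) + (Vp f).card = cost f := by
    have h1 : ∑ v ∈ Vp f, ((f v - 1) + 1) = ∑ v ∈ Vp f, f v := by
      apply Finset.sum_congr rfl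
      intro v hv
      have := (Finset.mem_filter.mp hv).2
      omega
    rw [← sum_Vp_eq_cost, ← h1, Finset.sum_add_distrib]
    simp
  have hB2le : B2.card ≤ ∑ v ∈ Vp f, (f v - 1) := by
    have hB2Vp : B2 ⊆ Vp f := fun v hv => hBVp (Finset.mem_filter.mp hv).1
    calc B2.card = ∑ _v ∈ B2, 1 := by simp
      _ ≤ ∑ v ∈ B2, (f v - 1) := by
          apply Finset.sum_le_sum
          intro v hv
          have h1 := (Finset.mem_filter.mp hv).2
          have h2 := (Finset.mem_filter.mp (hBVp (Finset.mem_filter.mp hv).1)).2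
          omega
      _ ≤ ∑ v ∈ Vp f, (f v - 1) := Finset.sum_le_sum_of_subset hB2Vp
  -- B1 elements hear at least two vertices
  have hB1D : B1 ⊆ D := by
    intro v hv
    have h1 := (Finset.mem_filter.mp (hBVp (Finset.mem_filter.mp hv).1)).2
    exact Finset.mem_filter.2 ⟨Finset.mem_univ _, ⟨v, self_mem_hears h1⟩⟩
  have hB1two : ∀ v ∈ B1, 2 ≤ (hearsFin f v).card := by
    intro v hv
    rw [hB1, Finset.mem_filter] at hv
    obtain ⟨hvB, hv1⟩ := hv
    rw [hB, Finset.mem_image] at hvB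
    obtain ⟨u, hu, rfl⟩ := hvB
    obtain ⟨p, hp1, _, _, _, hp5⟩ := hspec u hu
    obtain ⟨w, hwne, hwmem⟩ := hp5 hv1
    have h1 : w ∈ hearsFin f (β u) := mem_hearsFin.2 hwmem
    have h2 : β u ∈ hearsFin f (β u) := mem_hearsFin.2 (self_mem_hears hp1)
    exact Finset.one_lt_card.2 ⟨w, h1, β u, h2, hwne⟩
  -- total hearing count
  have hDsplit : (∑ u ∈ D \ B1, (hearsFin f u).card) + (∑ u ∈ B1, (hearsFin f u).card)
      = ∑ u ∈ D, (hearsFin f u).card := Finset.sum_sdiff hB1D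
  have hD1 : ∀ u ∈ D, 1 ≤ (hearsFin f u).card := by
    intro u hu
    rw [hD, Finset.mem_filter] at hu
    obtain ⟨w, hw⟩ := hu.2
    have : w ∈ hearsFin f u := mem_hearsFin.2 hw
    exact Finset.card_pos.2 ⟨w, this⟩
  have hDlow : (D \ B1).card ≤ ∑ u ∈ D \ B1, (hearsFin f u).card := by
    calc (D \ B1).card = ∑ _u ∈ D \ B1, 1 := by simp
      _ ≤ _ := Finset.sum_le_sum (fun u hu => hD1 u (Finset.mem_sdiff.mp hu).1)
  have hB1low : 2 * B1.card ≤ ∑ u ∈ B1, (hearsFin f u).card := by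
    calc 2 * B1.card = ∑ _u ∈ B1, 2 := by rw [Finset.sum_const]; ring
      _ ≤ _ := Finset.sum_le_sum hB1two
  have hsdcard : (D \ B1).card = D.card - B1.card := Finset.card_sdiff_of_subset hB1D
  have hB1cardle : B1.card ≤ D.card := Finset.card_le_card hB1D
  have hDle : ∑ u ∈ D, (hearsFin f u).card ≤ ∑ u : Fin n, (hearsFin f u).card :=
    Finset.sum_le_sum_of_subset (Finset.subset_univ D)
  have htotal : ∑ u : Fin n, (hearsFin f u).card ≤ 2 * cost f + (Vp f).card := by
    rw [← sum_ball_eq]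
    exact sum_ball_le hn2 f
  have hm := card_Vp_le_cost f
  omega

end CycleIrr

open Broadcast in
/-- For every integer n ≥ 3, ir_b(C_n) = γ_b(C_n) = ⌈n/3⌉. -/
theorem broadcastIrredundance_cycleGraph (n : ℕ) (hn : 3 ≤ n) :
    broadcastIrredundance (SimpleGraph.cycleGraph n) =
      broadcastDomination (SimpleGraph.cycleGraph n) ∧
    broadcastDomination (SimpleGraph.cycleGraph n) = (n + 2) / 3 := by
  classical
  haveI : NeZero n := ⟨by omega⟩
  have hn2 : 2 ≤ n := by omega
  have hγ : broadcastDomination (SimpleGraph.cycleGraph n) = (n + 2) / 3 :=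
    CycleCount.gammab_cycle hn
  refine ⟨?_, hγ⟩
  rw [hγ]
  have hconn : (SimpleGraph.cycleGraph n).Connected := by
    rcases n with _ | m
    · omega
    · exact SimpleGraph.cycleGraph_connected
  -- existence of a maximal irredundant broadcast of cost ≤ (n+2)/3
  obtain ⟨f', hf', hcost⟩ := Broadcast.exists_maximal_irredundant_of_dominating hconn
    (CyclePart1.f0_dominating hn2)
  rw [CyclePart1.f0_cost] at hcost
  have hlow : ∀ c ∈ {c | ∃ f, IsMaximalIrredundant (SimpleGraph.cycleGraph n) f ∧ cost f = c},
      (n + 2) / 3 ≤ c := by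
    rintro c ⟨f, hf, rfl⟩
    have := CycleIrr.maxirr_lower hn hf
    omega
  have hmem : cost f' ∈
      {c | ∃ f, IsMaximalIrredundant (SimpleGraph.cycleGraph n) f ∧ cost f = c} :=
    ⟨f', hf', rfl⟩
  have h1 : broadcastIrredundance (SimpleGraph.cycleGraph n) ≤ (n + 2) / 3 :=
    le_trans (Nat.sInf_le hmem) hcost
  have h2 : (n + 2) / 3 ≤ broadcastIrredundance (SimpleGraph.cycleGraph n) := by
    have hne : {c | ∃ f, IsMaximalIrredundant (SimpleGraph.cycleGraph n) f ∧
        cost f = c}.Nonempty := ⟨_, hmem⟩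
    exact hlow _ (Nat.sInf_mem hne)
  omega
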